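/- With f^n_{u,v,w} ∈ k⟨x,y,z⟩ as defined by the recursion f^n_{u,v,w} = a^v b^w f^{n-1}_{u-1,v,w} x + c^w f^{n-1}_{u,v-1,w} y + f^{n-1}_{u,v,w-1} z (and f^0_{0,0,0} = 1), for every r with 0 ≤ r ≤ n one has the comultiplicative factorization f^n_{u,v,w} = Σ_{s=max(0,u+r−n)}^{min(u,r)} Σ_{t=max(0,v+r−n)}^{min(v,r)} a^{(u−s)t} b^{(u−s)(r−s−t)} c^{(v−t)(r−s−t)} f^r_{s,t,r−s−t} · f^{n−r}_{u−s,v−t,w+s+t−r}. -/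

import Mathlib

open Finset

section Aux

variable {k : Type*} [Field k]

/-- The summand appearing in the comultiplicative factorization. -/
def term7 (a b c : k) (f : ℤ → ℤ → ℤ → FreeAlgebra k (Fin 3)) (u v w r s t : ℤ) :
    FreeAlgebra k (Fin 3) :=
  (a ^ ((u - s) * t) * b ^ ((u - s) * (r - s - t)) * c ^ ((v - t) * (r - s - t))) •
    (f s t (r - s - t) * f (u - s) (v - t) (w + s + t - r))

/-- The factorization sum, taken over the full square `[0,r] × [0,r]`. -/
noncomputable def G7 (a b c : k) (f : ℤ → ℤ → ℤ → FreeAlgebra k (Fin 3)) (u v w r : ℤ) :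
    FreeAlgebra k (Fin 3) :=
  ∑ s ∈ Icc 0 r, ∑ t ∈ Icc 0 r, term7 a b c f u v w r s t

variable (a b c : k) (f : ℤ → ℤ → ℤ → FreeAlgebra k (Fin 3))

theorem term7_zero (hneg : ∀ u v w : ℤ, u < 0 ∨ v < 0 ∨ w < 0 → f u v w = 0)
    (u v w r s t : ℤ)
    (h : s < 0 ∨ t < 0 ∨ r - s - t < 0 ∨ u - s < 0 ∨ v - t < 0 ∨ w + s + t - r < 0) :
    term7 a b c f u v w r s t = 0 := by
  unfold term7
  by_cases h1 : s < 0 ∨ t < 0 ∨ r - s - t < 0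
  · rw [hneg _ _ _ h1, zero_mul, smul_zero]
  · rw [hneg (u - s) (v - t) (w + s + t - r) (by omega), mul_zero, smul_zero]

theorem G7_zero (hneg : ∀ u v w : ℤ, u < 0 ∨ v < 0 ∨ w < 0 → f u v w = 0)
    (u v w r : ℤ) (h : u < 0 ∨ v < 0 ∨ w < 0) :
    G7 a b c f u v w r = 0 := by
  refine Finset.sum_eq_zero fun s hs => Finset.sum_eq_zero fun t ht => ?_
  simp only [mem_Icc] at hs ht
  exact term7_zero a b c f hneg u v w r s t (by omega)

theorem G7_diag (h0 : f 0 0 0 = 1)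
    (hneg : ∀ u v w : ℤ, u < 0 ∨ v < 0 ∨ w < 0 → f u v w = 0)
    (u v w r : ℤ) (hu : 0 ≤ u) (hv : 0 ≤ v) (hw : 0 ≤ w) (hr : r = u + v + w) :
    G7 a b c f u v w r = f u v w := by
  unfold G7
  rw [Finset.sum_eq_single_of_mem u (by simp only [mem_Icc]; omega)
    (fun s hs hsu => Finset.sum_eq_zero fun t ht => by
      simp only [mem_Icc] at hs ht
      exact term7_zero a b c f hneg u v w r s t (by omega))]
  rw [Finset.sum_eq_single_of_mem v (by simp only [mem_Icc]; omega)
    (fun t ht htv => by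
      simp only [mem_Icc] at ht
      exact term7_zero a b c f hneg u v w r u t (by omega))]
  unfold term7
  rw [show r - u - v = w by omega, show w + u + v - r = (0:ℤ) by omega]
  simp only [sub_self, zero_mul, zpow_zero, mul_one, one_mul, h0, one_smul]

theorem G7_rec (ha : a ≠ 0) (hb : b ≠ 0) (hc : c ≠ 0)
    (x y z : FreeAlgebra k (Fin 3))
    (hneg : ∀ u v w : ℤ, u < 0 ∨ v < 0 ∨ w < 0 → f u v w = 0)
    (hrec : ∀ u v w : ℤ, 0 ≤ u → 0 ≤ v → 0 ≤ w → 1 ≤ u + v + w →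
      f u v w = (a ^ v * b ^ w) • (f (u - 1) v w * x)
        + (c ^ w) • (f u (v - 1) w * y)
        + f u v (w - 1) * z)
    (u v w r : ℤ) (hr : 0 ≤ r) (hn : r + 1 ≤ u + v + w) :
    G7 a b c f u v w r
      = (a ^ v * b ^ w) • (G7 a b c f (u - 1) v w r * x)
        + (c ^ w) • (G7 a b c f u (v - 1) w r * y)
        + G7 a b c f u v (w - 1) r * z := by
  have hrec' : ∀ U V W : ℤ, 1 ≤ U + V + W →
      f U V W = (a ^ V * b ^ W) • (f (U - 1) V W * x)
        + (c ^ W) • (f U (V - 1) W * y)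
        + f U V (W - 1) * z := by
    intro U V W h
    by_cases h1 : 0 ≤ U ∧ 0 ≤ V ∧ 0 ≤ W
    · exact hrec U V W h1.1 h1.2.1 h1.2.2 h
    · have hU : U < 0 ∨ V < 0 ∨ W < 0 := by omega
      rw [hneg U V W hU, hneg (U - 1) V W (by omega), hneg U (V - 1) W (by omega),
        hneg U V (W - 1) (by omega)]
      simp
  have key : G7 a b c f u v w r
      = ∑ s ∈ Icc 0 r, ∑ t ∈ Icc 0 r,
          ((a ^ v * b ^ w) • (term7 a b c f (u - 1) v w r s t * x)
            + (c ^ w) • (term7 a b c f u (v - 1) w r s t * y)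
            + term7 a b c f u v (w - 1) r s t * z) := by
    refine Finset.sum_congr rfl fun s hs => Finset.sum_congr rfl fun t ht => ?_
    unfold term7
    rw [hrec' (u - s) (v - t) (w + s + t - r) (by omega)]
    rw [show u - s - 1 = u - 1 - s by ring, show v - t - 1 = v - 1 - t by ring,
      show w + s + t - r - 1 = w - 1 + s + t - r by ring]
    have s1 : (a ^ ((u - s) * t) * b ^ ((u - s) * (r - s - t)) * c ^ ((v - t) * (r - s - t)))
        * (a ^ (v - t) * b ^ (w + s + t - r))
        = (a ^ v * b ^ w) * (a ^ ((u - 1 - s) * t) * b ^ ((u - 1 - s) * (r - s - t))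
            * c ^ ((v - t) * (r - s - t))) := by
      rw [show (u - s) * t = (u - 1 - s) * t + t by ring, zpow_add₀ ha,
        show (u - s) * (r - s - t) = (u - 1 - s) * (r - s - t) + (r - s - t) by ring,
        zpow_add₀ hb,
        show a ^ v = a ^ (v - t) * a ^ t by rw [← zpow_add₀ ha]; ring_nf,
        show b ^ w = b ^ (w + s + t - r) * b ^ (r - s - t) by rw [← zpow_add₀ hb]; ring_nf]
      ring
    have s2 : (a ^ ((u - s) * t) * b ^ ((u - s) * (r - s - t)) * c ^ ((v - t) * (r - s - t)))
        * c ^ (w + s + t - r)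
        = c ^ w * (a ^ ((u - s) * t) * b ^ ((u - s) * (r - s - t))
            * c ^ ((v - 1 - t) * (r - s - t))) := by
      rw [show (v - t) * (r - s - t) = (v - 1 - t) * (r - s - t) + (r - s - t) by ring,
        zpow_add₀ hc,
        show c ^ w = c ^ (w + s + t - r) * c ^ (r - s - t) by rw [← zpow_add₀ hc]; ring_nf]
      ring
    simp only [mul_add, smul_add, mul_smul_comm, smul_smul, smul_mul_assoc]
    rw [s1, s2]
    simp only [mul_assoc]
  rw [key]
  unfold G7
  simp only [Finset.sum_add_distrib, Finset.sum_mul, Finset.smul_sum]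

theorem G7_eq_Icc (hneg : ∀ u v w : ℤ, u < 0 ∨ v < 0 ∨ w < 0 → f u v w = 0)
    (u v w r n : ℤ) (hu : 0 ≤ u) (hv : 0 ≤ v) (hw : 0 ≤ w)
    (hn : u + v + w = n) (hr0 : 0 ≤ r) (hrn : r ≤ n) :
    ∑ s ∈ Icc (max 0 (u + r - n)) (min u r),
      ∑ t ∈ Icc (max 0 (v + r - n)) (min v r), term7 a b c f u v w r s t
      = G7 a b c f u v w r := by
  have h1 : ∀ s : ℤ, 0 ≤ s → s ≤ u → s ≤ r →
      ∑ t ∈ Icc (max 0 (v + r - n)) (min v r), term7 a b c f u v w r s t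
        = ∑ t ∈ Icc 0 r, term7 a b c f u v w r s t := by
    intro s h1 h2 h3
    refine Finset.sum_subset (Icc_subset_Icc (le_max_left _ _) (min_le_right _ _)) ?_
    intro t ht hnt
    simp only [mem_Icc, max_le_iff, le_min_iff, not_and_or, not_le] at ht hnt
    exact term7_zero a b c f hneg u v w r s t (by omega)
  calc ∑ s ∈ Icc (max 0 (u + r - n)) (min u r),
        ∑ t ∈ Icc (max 0 (v + r - n)) (min v r), term7 a b c f u v w r s t
      = ∑ s ∈ Icc (max 0 (u + r - n)) (min u r),
        ∑ t ∈ Icc 0 r, term7 a b c f u v w r s t := by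
        refine Finset.sum_congr rfl fun s hs => ?_
        simp only [mem_Icc, max_le_iff, le_min_iff] at hs
        exact h1 s hs.1.1 hs.2.1 hs.2.2
    _ = G7 a b c f u v w r := by
        refine Finset.sum_subset (Icc_subset_Icc (le_max_left _ _) (min_le_right _ _)) ?_
        intro s hs hns
        simp only [mem_Icc, max_le_iff, le_min_iff, not_and_or, not_le] at hs hns
        refine Finset.sum_eq_zero fun t ht => ?_
        simp only [mem_Icc] at ht
        exact term7_zero a b c f hneg u v w r s t (by omega)

end Aux

/- With f^n_{u,v,w} ∈ k⟨x,y,z⟩ as defined by the recursion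
   f^n_{u,v,w} = a^v b^w f^{n-1}_{u-1,v,w}·x + c^w f^{n-1}_{u,v-1,w}·y +
   f^{n-1}_{u,v,w-1}·z (and f^0_{0,0,0} = 1, negative indices give 0), for every
   0 ≤ r ≤ n one has the comultiplicative factorization
   f^n_{u,v,w} = Σ_{s=max(0,u+r−n)}^{min(u,r)} Σ_{t=max(0,v+r−n)}^{min(v,r)}
     a^{(u−s)t} b^{(u−s)(r−s−t)} c^{(v−t)(r−s−t)}
     f^r_{s,t,r−s−t} · f^{n−r}_{u−s,v−t,w+s+t−r}. -/
theorem stmt7 (k : Type*) [Field k] (a b c : k)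
    (ha : a ≠ 0) (hb : b ≠ 0) (hc : c ≠ 0)
    (x y z : FreeAlgebra k (Fin 3))
    (hx : x = FreeAlgebra.ι k 0) (hy : y = FreeAlgebra.ι k 1)
    (hz : z = FreeAlgebra.ι k 2)
    (f : ℤ → ℤ → ℤ → FreeAlgebra k (Fin 3))
    (h0 : f 0 0 0 = 1)
    (hneg : ∀ u v w : ℤ, u < 0 ∨ v < 0 ∨ w < 0 → f u v w = 0)
    (hrec : ∀ u v w : ℤ, 0 ≤ u → 0 ≤ v → 0 ≤ w → 1 ≤ u + v + w →
      f u v w = (a ^ v * b ^ w) • (f (u - 1) v w * x)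
        + (c ^ w) • (f u (v - 1) w * y)
        + f u v (w - 1) * z) :
    ∀ u v w r n : ℤ, 0 ≤ u → 0 ≤ v → 0 ≤ w → u + v + w = n → 0 ≤ r → r ≤ n →
      f u v w =
        ∑ s ∈ Finset.Icc (max 0 (u + r - n)) (min u r),
          ∑ t ∈ Finset.Icc (max 0 (v + r - n)) (min v r),
            (a ^ ((u - s) * t) * b ^ ((u - s) * (r - s - t))
              * c ^ ((v - t) * (r - s - t))) •
              (f s t (r - s - t) * f (u - s) (v - t) (w + s + t - r)) := by
  intro u v w r n hu hv hw hn hr0 hrn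
  show f u v w = ∑ s ∈ Finset.Icc (max 0 (u + r - n)) (min u r),
      ∑ t ∈ Finset.Icc (max 0 (v + r - n)) (min v r), term7 a b c f u v w r s t
  rw [G7_eq_Icc a b c f hneg u v w r n hu hv hw hn hr0 hrn]
  have key : ∀ m : ℕ, ∀ u v w r : ℤ, 0 ≤ u → 0 ≤ v → 0 ≤ w →
      u + v + w = (m : ℤ) → 0 ≤ r → r ≤ (m : ℤ) →
      f u v w = G7 a b c f u v w r := by
    intro m
    induction m with
    | zero =>
      intro u v w r hu hv hw hm hr0 hr1
      have hu0 : u = 0 := by omega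
      have hv0 : v = 0 := by omega
      have hw0 : w = 0 := by omega
      have hr : r = 0 := by omega
      subst hu0 hv0 hw0 hr
      rw [G7_diag a b c f h0 hneg 0 0 0 0 le_rfl le_rfl le_rfl (by ring)]
    | succ m ih =>
      intro u v w r hu hv hw hm hr0 hr1
      by_cases hr : r = u + v + w
      · rw [G7_diag a b c f h0 hneg u v w r hu hv hw hr]
      · have hrm : r ≤ (m : ℤ) := by push_cast at hm hr1 ⊢; omega
        rw [hrec u v w hu hv hw (by push_cast at hm; omega),
          G7_rec a b c f ha hb hc x y z hneg hrec u v w r hr0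
            (by push_cast at hm; omega)]
        have e1 : G7 a b c f (u - 1) v w r = f (u - 1) v w := by
          rcases lt_or_ge (u - 1) 0 with h | h
          · rw [G7_zero a b c f hneg _ _ _ _ (Or.inl h), hneg _ _ _ (Or.inl h)]
          · exact (ih (u - 1) v w r h hv hw (by push_cast at hm ⊢; omega) hr0 hrm).symm
        have e2 : G7 a b c f u (v - 1) w r = f u (v - 1) w := by
          rcases lt_or_ge (v - 1) 0 with h | h
          · rw [G7_zero a b c f hneg _ _ _ _ (Or.inr (Or.inl h)),
              hneg _ _ _ (Or.inr (Or.inl h))]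
          · exact (ih u (v - 1) w r hu h hw (by push_cast at hm ⊢; omega) hr0 hrm).symm
        have e3 : G7 a b c f u v (w - 1) r = f u v (w - 1) := by
          rcases lt_or_ge (w - 1) 0 with h | h
          · rw [G7_zero a b c f hneg _ _ _ _ (Or.inr (Or.inr h)),
              hneg _ _ _ (Or.inr (Or.inr h))]
          · exact (ih u v (w - 1) r hu hv h (by push_cast at hm ⊢; omega) hr0 hrm).symm
        rw [e1, e2, e3]
  exact key n.toNat u v w r hu hv hw
    (by rw [Int.toNat_of_nonneg (by omega : (0:ℤ) ≤ n)]; exact hn)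
    hr0 (by rw [Int.toNat_of_nonneg (by omega : (0:ℤ) ≤ n)]; exact hrn)
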